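/- arXiv:1307.0044 — 5 statements merged into one kernel-verified Lean document; each statement's English description precedes it below -/
import Mathlib

section
/- Consider the battery-model energy allocation problem with unit conversion efficiency, horizon K, integer capacity C, initial storage level B₀ ≤ C, final requirement B_K = 0, harvest amounts Q(i) ∈ ℕ for i = 0,…,K−1, leakage functions L(i,·) : ℕ → ℕ such that for each i, L(i,·) is nondecreasing, L(i,B) ≤ B for all B, and B ↦ B − L(i,B) is nondecreasing, spending-rate set S = { j·s₀ : 1 ≤ j ≤ m } for some integers s₀ > 0 and m ≥ 1, and a utility function U : ℕ → ℕ satisfying U(x+y) = U(x) + U(y) for all x, y ∈ ℕ. Let s^g be the greedy spending vector defined by: B^g(0) = B₀, and in each slot i, s^g(i) is the largest s ∈ S ∪ {0} with s ≤ B^g(i) and B^g(i) + Q(i) − L(i, B^g(i)) − s ≥ 0, with B^g(i+1) = min(B^g(i) + Q(i) − L(i, B^g(i)) − s^g(i), C). Then s^g is feasible, and for every feasible spending vector s one has Σ_{i=0}^{K−1} U(s(i)) ≤ Σ_{i=0}^{K−1} U(s^g(i)); that is, the greedy online algorithm is optimal. -/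
/-- Battery level evolution (in `ℤ`) for the battery-model energy allocation
problem with unit conversion efficiency: initial level `B₀`, capacity `C`,
harvests `Q`, leakage `L`, spending vector `s`. -/
def batteryLevel (B₀ C : ℕ) (Q : ℕ → ℕ) (L : ℕ → ℕ → ℕ) (s : ℕ → ℕ) : ℕ → ℤ
  | 0 => (B₀ : ℤ)
  | i + 1 =>
      min (batteryLevel B₀ C Q L s i + (Q i : ℤ)
            - (L i (batteryLevel B₀ C Q L s i).toNat : ℤ) - (s i : ℤ)) (C : ℤ)

/-- Feasibility of a spending vector `s` over horizon `K`, capacity `C`,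
initial level `B₀`, final requirement `BK`, harvests `Q`, leakage `L`,
and spending-rate set `S`. -/
def Feasible (K C B₀ BK : ℕ) (Q : ℕ → ℕ) (L : ℕ → ℕ → ℕ) (S : Set ℕ)
    (s : ℕ → ℕ) : Prop :=
  (∀ i < K, s i ∈ S ∪ {0}) ∧
  (∀ i < K, (s i : ℤ) ≤ batteryLevel B₀ C Q L s i) ∧
  (∀ i ≤ K, 0 ≤ batteryLevel B₀ C Q L s i) ∧
  (BK : ℤ) ≤ batteryLevel B₀ C Q L s K

/-- The greedy online algorithm is feasible and optimal for the battery model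
with `B_K = 0`, additive utility, and spending set `{j·s₀ : 1 ≤ j ≤ m}`. -/
theorem greedy_optimal
    (K C B₀ : ℕ) (hB₀C : B₀ ≤ C)
    (Q : ℕ → ℕ) (L : ℕ → ℕ → ℕ)
    (hLmono : ∀ i, Monotone (L i))
    (hLle : ∀ i B, L i B ≤ B)
    (hLdiff : ∀ i, Monotone (fun B => B - L i B))
    (s₀ m : ℕ) (hs₀ : 0 < s₀) (hm : 1 ≤ m)
    (S : Set ℕ) (hSdef : S = {x | ∃ j, 1 ≤ j ∧ j ≤ m ∧ x = j * s₀})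
    (U : ℕ → ℕ) (hU : ∀ x y, U (x + y) = U x + U y)
    (sg : ℕ → ℕ)
    (hsgmem : ∀ i < K, sg i ∈ S ∪ {0})
    (hsgfeas : ∀ i < K, (sg i : ℤ) ≤ batteryLevel B₀ C Q L sg i ∧
        0 ≤ batteryLevel B₀ C Q L sg i + (Q i : ℤ)
              - (L i (batteryLevel B₀ C Q L sg i).toNat : ℤ) - (sg i : ℤ))
    (hsgmax : ∀ i < K, ∀ x ∈ S ∪ {0},
        (x : ℤ) ≤ batteryLevel B₀ C Q L sg i →
        0 ≤ batteryLevel B₀ C Q L sg i + (Q i : ℤ)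
              - (L i (batteryLevel B₀ C Q L sg i).toNat : ℤ) - (x : ℤ) →
        x ≤ sg i) :
    Feasible K C B₀ 0 Q L S sg ∧
    ∀ s : ℕ → ℕ, Feasible K C B₀ 0 Q L S s →
      ∑ i ∈ Finset.range K, U (s i) ≤ ∑ i ∈ Finset.range K, U (sg i) := by
  have hstep : ∀ (v : ℕ → ℕ) (i : ℕ), batteryLevel B₀ C Q L v (i + 1)
      = min (batteryLevel B₀ C Q L v i + (Q i : ℤ)
            - (L i (batteryLevel B₀ C Q L v i).toNat : ℤ) - (v i : ℤ)) (C : ℤ) :=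
    fun v i => rfl
  have hB0 : ∀ (v : ℕ → ℕ), batteryLevel B₀ C Q L v 0 = (B₀ : ℤ) := fun v => rfl
  have hgpos : ∀ i, i ≤ K → 0 ≤ batteryLevel B₀ C Q L sg i := by
    intro i
    induction i with
    | zero => intro _; rw [hB0]; exact Int.natCast_nonneg B₀
    | succ n ih =>
      intro hn
      rw [hstep]
      exact le_min (hsgfeas n (by omega)).2 (Int.natCast_nonneg C)
  have hgfeas : Feasible K C B₀ 0 Q L S sg := by
    refine ⟨hsgmem, fun i hi => (hsgfeas i hi).1, hgpos, ?_⟩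
    simpa using hgpos K le_rfl
  have hmem : ∀ x ∈ S ∪ {0}, s₀ ∣ x := by
    intro x hx
    rcases hx with hx | hx
    · rw [hSdef] at hx
      obtain ⟨j, _, _, rfl⟩ := hx
      exact ⟨j, Nat.mul_comm j s₀⟩
    · simp only [Set.mem_singleton_iff] at hx
      simp [hx]
  refine ⟨hgfeas, ?_⟩
  have key : ∀ s : ℕ → ℕ, Feasible K C B₀ 0 Q L S s → ∀ i, i ≤ K →
      0 ≤ (∑ r ∈ Finset.range i, (sg r : ℤ)) - ∑ r ∈ Finset.range i, (s r : ℤ) ∧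
      batteryLevel B₀ C Q L s i - batteryLevel B₀ C Q L sg i ≤
        (∑ r ∈ Finset.range i, (sg r : ℤ)) - ∑ r ∈ Finset.range i, (s r : ℤ) ∧
      (s₀ : ℤ) ∣ ((∑ r ∈ Finset.range i, (sg r : ℤ)) - ∑ r ∈ Finset.range i, (s r : ℤ)) := by
    intro s hfeas
    obtain ⟨hmemS, hsle, hspos, -⟩ := hfeas
    intro i
    induction i with
    | zero => intro _; simp [hB0]
    | succ n ih =>
      intro hn
      have hnK : n < K := hn
      obtain ⟨ih1, ih2, ih3⟩ := ih (by omega)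
      obtain ⟨g, hg⟩ := Int.eq_ofNat_of_zero_le (hgpos n (by omega))
      obtain ⟨t, ht⟩ := Int.eq_ofNat_of_zero_le (hspos n (by omega))
      rw [hg, ht] at ih2
      set D : ℤ := (∑ r ∈ Finset.range n, (sg r : ℤ)) - ∑ r ∈ Finset.range n, (s r : ℤ)
        with hD
      have f1 : (s n : ℤ) ≤ (t : ℤ) := ht ▸ hsle n hnK
      have hBs1 := hspos (n + 1) hn
      rw [hstep, ht] at hBs1
      simp only [Int.toNat_natCast] at hBs1
      have f2 : 0 ≤ (t : ℤ) + (Q n : ℤ) - (L n t : ℤ) - (s n : ℤ) :=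
        le_trans hBs1 (min_le_left _ _)
      have f3 : (t : ℤ) + (Q n : ℤ) - (L n t : ℤ) - D ≤ (g : ℤ) + (Q n : ℤ) - (L n g : ℤ) := by
        rcases le_total t g with h | h
        · have h1 : t - L n t ≤ g - L n g := hLdiff n h
          have h2 := hLle n t
          have h3 := hLle n g
          omega
        · have h1 : L n g ≤ L n t := hLmono n h
          omega
      have d1 : (s₀ : ℤ) ∣ (sg n : ℤ) := Int.natCast_dvd_natCast.mpr (hmem _ (hsgmem n hnK))
      have d2 : (s₀ : ℤ) ∣ (s n : ℤ) := Int.natCast_dvd_natCast.mpr (hmem _ (hmemS n hnK))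
      have f4 : (s n : ℤ) - D ≤ (sg n : ℤ) := by
        rcases le_or_gt ((s n : ℤ)) D with h | h
        · have h0 : (0 : ℤ) ≤ (sg n : ℤ) := Int.natCast_nonneg _
          omega
        · have hDn : ((D.toNat : ℕ) : ℤ) = D := Int.toNat_of_nonneg ih1
          have hdvdDn : s₀ ∣ D.toNat := by
            have h5 : (s₀ : ℤ) ∣ ((D.toNat : ℕ) : ℤ) := by rw [hDn]; exact ih3
            exact_mod_cast h5
          have hslt : D.toNat < s n := by omega
          have hsnS : s n ∈ S := by
            rcases hmemS n hnK with hx | hx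
            · exact hx
            · simp only [Set.mem_singleton_iff] at hx; omega
          rw [hSdef] at hsnS
          obtain ⟨j, hj1, hjm, hjs⟩ := hsnS
          obtain ⟨k, hk⟩ := hdvdDn
          have hmul : s₀ * k < s₀ * j := by rw [Nat.mul_comm s₀ j]; omega
          have hkj : k < j := lt_of_mul_lt_mul_left hmul (Nat.zero_le _)
          have hxnat : (j - k) * s₀ = s n - s₀ * k := by
            rw [hjs, Nat.sub_mul, Nat.mul_comm k s₀]
          have hxZ : (((j - k) * s₀ : ℕ) : ℤ) = (s n : ℤ) - D := by
            have h2 : s₀ * k ≤ s n := by omega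
            rw [hxnat, ← hDn, hk]
            omega
          have hxmem : (j - k) * s₀ ∈ S ∪ {0} :=
            Set.mem_union_left _ (by rw [hSdef]; exact ⟨j - k, by omega, by omega, rfl⟩)
          have hx1 : (((j - k) * s₀ : ℕ) : ℤ) ≤ batteryLevel B₀ C Q L sg n := by
            rw [hg, hxZ]; omega
          have hx2 : 0 ≤ batteryLevel B₀ C Q L sg n + (Q n : ℤ)
              - (L n (batteryLevel B₀ C Q L sg n).toNat : ℤ) - (((j - k) * s₀ : ℕ) : ℤ) := by
            rw [hg]
            simp only [Int.toNat_natCast]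
            omega
          have hfin := hsgmax n hnK _ hxmem hx1 hx2
          have hfin' : (((j - k) * s₀ : ℕ) : ℤ) ≤ (sg n : ℤ) := by exact_mod_cast hfin
          omega
      rw [Finset.sum_range_succ, Finset.sum_range_succ, hstep, hstep, hg, ht]
      simp only [Int.toNat_natCast]
      refine ⟨by omega, ?_, ?_⟩
      · rcases le_total ((g : ℤ) + (Q n : ℤ) - (L n g : ℤ) - (sg n : ℤ)) (C : ℤ) with h | h
        · rw [min_eq_left h]
          have h5 := min_le_left ((t : ℤ) + (Q n : ℤ) - (L n t : ℤ) - (s n : ℤ)) (C : ℤ)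
          omega
        · rw [min_eq_right h]
          have h5 := min_le_right ((t : ℤ) + (Q n : ℤ) - (L n t : ℤ) - (s n : ℤ)) (C : ℤ)
          omega
      · have heq : (∑ r ∈ Finset.range n, (sg r : ℤ)) + (sg n : ℤ)
            - ((∑ r ∈ Finset.range n, (s r : ℤ)) + (s n : ℤ))
            = D + (sg n : ℤ) - (s n : ℤ) := by rw [hD]; ring
        rw [heq]
        exact dvd_sub (dvd_add ih3 d1) d2
  intro s hfeas
  have hK := (key s hfeas K le_rfl).1
  have h1 : ((∑ i ∈ Finset.range K, s i : ℕ) : ℤ) ≤ ((∑ i ∈ Finset.range K, sg i : ℕ) : ℤ) := by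
    rw [Nat.cast_sum, Nat.cast_sum]
    omega
  have hsumN : ∑ i ∈ Finset.range K, s i ≤ ∑ i ∈ Finset.range K, sg i := by exact_mod_cast h1
  have hU0 : U 0 = 0 := by
    have h := hU 0 0
    simp only [Nat.add_zero] at h
    omega
  have hUmono : ∀ a b : ℕ, a ≤ b → U a ≤ U b := by
    intro a b hab
    have h := hU a (b - a)
    rw [Nat.add_sub_cancel' hab] at h
    omega
  have hUsum : ∀ (f : ℕ → ℕ) (n : ℕ),
      ∑ i ∈ Finset.range n, U (f i) = U (∑ i ∈ Finset.range n, f i) := by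
    intro f n
    induction n with
    | zero => simp [hU0]
    | succ k ihk => rw [Finset.sum_range_succ, Finset.sum_range_succ, ihk, hU]
  rw [hUsum, hUsum]
  exact hUmono _ _ hsumN
end

section
/- Consider the battery-model energy allocation problem with unit conversion efficiency, horizon K, integer capacity C, initial level B₀ ≤ C, final requirement B_K = 0, harvests Q(i) ∈ ℕ, leakage functions L(i,·) that are nondecreasing with L(i,B) ≤ B and B ↦ B − L(i,B) nondecreasing, and spending-rate set S = { j·s₀ : 1 ≤ j ≤ m } with s₀ > 0. Let s^g be the greedy spending vector (in each slot spend the largest s ∈ S ∪ {0} with s ≤ B^g(i) and B^g(i) + Q(i) − L(i, B^g(i)) − s ≥ 0). Let s be any feasible spending vector and suppose i′ is the least index with s(i′) ≠ s^g(i′). Then s(i′) < s^g(i′), and there exists a feasible spending vector s′ that agrees with s^g on every slot j ≤ i′ and satisfies Σ_{i=0}^{K−1} s′(i) ≥ Σ_{i=0}^{K−1} s(i). -/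
private lemma batteryLevel_congr (B₀ C : ℕ) (Q : ℕ → ℕ) (L : ℕ → ℕ → ℕ)
    (s t : ℕ → ℕ) : ∀ i, (∀ j < i, s j = t j) →
    batteryLevel B₀ C Q L s i = batteryLevel B₀ C Q L t i
  | 0, _ => rfl
  | i+1, h => by
      have ih := batteryLevel_congr B₀ C Q L s t i (fun j hj => h j (Nat.lt_succ_of_lt hj))
      simp [batteryLevel, ih, h i (Nat.lt_succ_self i)]

private lemma min_le_min_add {x y C d : ℤ} (h : x ≤ y + d) (hd : 0 ≤ d) :
    min x C ≤ min y C + d := by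
  have h1 : min x C ≤ min (y + d) (C + d) := min_le_min h (by linarith)
  rw [min_add_add_right] at h1
  exact h1

private lemma f_bound (L : ℕ → ℕ → ℕ)
    (hLmono : ∀ i, Monotone (L i)) (hLle : ∀ i B, L i B ≤ B)
    (hLdiff : ∀ i, Monotone (fun B => B - L i B))
    (i : ℕ) (a a' d : ℤ) (ha : 0 ≤ a) (ha' : 0 ≤ a')
    (hd : a ≤ a' + d) (hd0 : 0 ≤ d) :
    a - (L i a.toNat : ℤ) ≤ a' - (L i a'.toNat : ℤ) + d := by
  rcases le_or_gt a a' with hle | hlt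
  · have hN : a.toNat ≤ a'.toNat := Int.toNat_le_toNat hle
    have h1 : (a.toNat - L i a.toNat : ℕ) ≤ a'.toNat - L i a'.toNat := hLdiff i hN
    have h2 : ((a.toNat - L i a.toNat : ℕ) : ℤ) = a - L i a.toNat := by
      have := hLle i a.toNat
      omega
    have h3 : ((a'.toNat - L i a'.toNat : ℕ) : ℤ) = a' - L i a'.toNat := by
      have := hLle i a'.toNat
      omega
    omega
  · have hN : a'.toNat ≤ a.toNat := Int.toNat_le_toNat hlt.le
    have h1 : L i a'.toNat ≤ L i a.toNat := hLmono i hN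
    omega

/-- Exchange step: if a feasible `s` first differs from the greedy vector `sg`
at slot `i'`, then `s i' < sg i'` and there is a feasible `s'` agreeing with
`sg` up to slot `i'` whose total spending is at least that of `s`. -/
theorem greedy_exchange
    (K C B₀ : ℕ) (hB₀C : B₀ ≤ C)
    (Q : ℕ → ℕ) (L : ℕ → ℕ → ℕ)
    (hLmono : ∀ i, Monotone (L i))
    (hLle : ∀ i B, L i B ≤ B)
    (hLdiff : ∀ i, Monotone (fun B => B - L i B))
    (s₀ m : ℕ) (hs₀ : 0 < s₀) (hm : 1 ≤ m)
    (S : Set ℕ) (hSdef : S = {x | ∃ j, 1 ≤ j ∧ j ≤ m ∧ x = j * s₀})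
    (sg : ℕ → ℕ)
    (hsgmem : ∀ i < K, sg i ∈ S ∪ {0})
    (hsgfeas : ∀ i < K, (sg i : ℤ) ≤ batteryLevel B₀ C Q L sg i ∧
        0 ≤ batteryLevel B₀ C Q L sg i + (Q i : ℤ)
              - (L i (batteryLevel B₀ C Q L sg i).toNat : ℤ) - (sg i : ℤ))
    (hsgmax : ∀ i < K, ∀ x ∈ S ∪ {0},
        (x : ℤ) ≤ batteryLevel B₀ C Q L sg i →
        0 ≤ batteryLevel B₀ C Q L sg i + (Q i : ℤ)
              - (L i (batteryLevel B₀ C Q L sg i).toNat : ℤ) - (x : ℤ) →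
        x ≤ sg i)
    (s : ℕ → ℕ) (hs : Feasible K C B₀ 0 Q L S s)
    (i' : ℕ) (hi'K : i' < K) (hne : s i' ≠ sg i')
    (hfirst : ∀ j < i', s j = sg j) :
    s i' < sg i' ∧
    ∃ s' : ℕ → ℕ, Feasible K C B₀ 0 Q L S s' ∧
      (∀ j ≤ i', s' j = sg j) ∧
      ∑ i ∈ Finset.range K, s i ≤ ∑ i ∈ Finset.range K, s' i := by
  obtain ⟨hsmem, hsle, hsnn, hsK⟩ := hs
  have hC : (0 : ℤ) ≤ (C : ℤ) := Int.ofNat_nonneg C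
  -- levels of s and sg agree up to i'
  have hBeq : ∀ j ≤ i', batteryLevel B₀ C Q L s j = batteryLevel B₀ C Q L sg j :=
    fun j hj => batteryLevel_congr B₀ C Q L s sg j
      (fun t ht => hfirst t (lt_of_lt_of_le ht hj))
  -- pre-min nonnegativity for s
  have hpre_s : ∀ i < K, 0 ≤ batteryLevel B₀ C Q L s i + (Q i : ℤ)
      - (L i (batteryLevel B₀ C Q L s i).toNat : ℤ) - (s i : ℤ) := by
    intro i hiK
    have h1 := hsnn (i+1) hiK
    simp only [batteryLevel, le_min_iff] at h1
    exact h1.1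
  -- s i' < sg i'
  have hlt : s i' < sg i' := by
    refine lt_of_le_of_ne ?_ hne
    refine hsgmax i' hi'K (s i') (hsmem i' hi'K) ?_ ?_
    · rw [← hBeq i' le_rfl]; exact hsle i' hi'K
    · rw [← hBeq i' le_rfl]; exact hpre_s i' hi'K
  refine ⟨hlt, ?_⟩
  -- deficit function and new spending vector
  obtain ⟨D, hD⟩ : ∃ D : ℕ → ℕ,
      D = fun j => (sg i' - s i') - ∑ t ∈ Finset.Ico (i'+1) j, s t := ⟨_, rfl⟩
  obtain ⟨s', hs'def⟩ : ∃ s' : ℕ → ℕ,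
      s' = fun j => if j ≤ i' then sg j else s j - D j := ⟨_, rfl⟩
  have hD1 : D (i'+1) = sg i' - s i' := by simp [hD]
  have hDstep : ∀ j, i'+1 ≤ j → D (j+1) = D j - s j := by
    intro j hj
    simp only [hD]
    rw [Finset.sum_Ico_succ_top hj]
    omega
  have hs'le : ∀ j ≤ i', s' j = sg j := fun j hj => by rw [hs'def]; exact if_pos hj
  have hs'gt : ∀ j, i' < j → s' j = s j - D j := fun j hj => by
    rw [hs'def]; exact if_neg (not_le.mpr hj)
  -- s' agrees with sg strictly below i'+1
  have hB'g : ∀ j ≤ i'+1, batteryLevel B₀ C Q L s' j = batteryLevel B₀ C Q L sg j := by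
    intro j hj
    exact batteryLevel_congr B₀ C Q L s' sg j
      (fun t ht => hs'le t (by omega))
  -- s' agrees with s strictly below i'
  have hB's : ∀ j ≤ i', batteryLevel B₀ C Q L s' j = batteryLevel B₀ C Q L s j := by
    intro j hj
    rw [hB'g j (by omega), ← hBeq j hj]
  -- the invariant
  have hinv : ∀ j, i'+1 ≤ j → j ≤ K →
      0 ≤ batteryLevel B₀ C Q L s' j ∧
      batteryLevel B₀ C Q L s j ≤ batteryLevel B₀ C Q L s' j + (D j : ℤ) := by
    intro j hj
    induction j, hj using Nat.le_induction with
    | base =>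
      intro _
      have hg := hsgfeas i' hi'K
      have e' : batteryLevel B₀ C Q L s' (i'+1) = batteryLevel B₀ C Q L sg (i'+1) :=
        hB'g (i'+1) le_rfl
      constructor
      · rw [e']
        simp only [batteryLevel, le_min_iff]
        exact ⟨hg.2, hC⟩
      · rw [e']
        simp only [batteryLevel]
        rw [hBeq i' le_rfl]
        have hd : ((D (i'+1) : ℕ) : ℤ) = (sg i' : ℤ) - (s i' : ℤ) := by
          rw [hD1]; omega
        rw [hd]
        apply min_le_min_add
        · push_cast; ring_nf; omega
        · omega
    | succ j hj ih =>
      intro hjK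
      obtain ⟨ih1, ih2⟩ := ih (by omega)
      have hjK' : j < K := by omega
      have ha : 0 ≤ batteryLevel B₀ C Q L s j := hsnn j (by omega)
      have hpre := hpre_s j hjK'
      set a := batteryLevel B₀ C Q L s j with hadef
      set a' := batteryLevel B₀ C Q L s' j with ha'def
      have fb : a - (L j a.toNat : ℤ) ≤ a' - (L j a'.toNat : ℤ) + (D j : ℤ) :=
        f_bound L hLmono hLle hLdiff j a a' (D j) ha ih1 ih2 (by positivity)
      have hLa' : (L j a'.toNat : ℤ) ≤ a' := by
        have h1 := hLle j a'.toNat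
        omega
      have hsj : s' j = s j - D j := hs'gt j (by omega)
      have hDj := hDstep j hj
      simp only [batteryLevel, ← hadef, ← ha'def, le_min_iff]
      rcases le_or_gt (s j) (D j) with hc | hc
      · have e1 : ((s' j : ℕ) : ℤ) = 0 := by rw [hsj]; omega
        have e2 : ((D (j+1) : ℕ) : ℤ) = (D j : ℤ) - (s j : ℤ) := by rw [hDj]; omega
        refine ⟨⟨by omega, hC⟩, ?_⟩
        rw [e1, e2]
        apply min_le_min_add
        · omega
        · omega
      · have e1 : ((s' j : ℕ) : ℤ) = (s j : ℤ) - (D j : ℤ) := by rw [hsj]; omega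
        have e2 : ((D (j+1) : ℕ) : ℤ) = 0 := by rw [hDj]; omega
        refine ⟨⟨by omega, hC⟩, ?_⟩
        rw [e1, e2]
        apply min_le_min_add
        · omega
        · omega
  -- divisibility facts
  have hdvdS : ∀ x ∈ S ∪ {0}, s₀ ∣ x := by
    intro x hx
    rcases hx with hx | hx
    · rw [hSdef] at hx
      obtain ⟨j, _, _, rfl⟩ := hx
      exact dvd_mul_left s₀ j
    · simp only [Set.mem_singleton_iff] at hx
      simp [hx]
  have hdvdD : ∀ i ≤ K, s₀ ∣ D i := by
    intro i hiK
    simp only [hD]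
    apply Nat.dvd_sub
    · exact Nat.dvd_sub (hdvdS _ (hsgmem i' hi'K)) (hdvdS _ (hsmem i' hi'K))
    · apply Finset.dvd_sum
      intro t ht
      simp only [Finset.mem_Ico] at ht
      exact hdvdS _ (hsmem t (by omega))
  -- feasibility of s'
  have hfeas : Feasible K C B₀ 0 Q L S s' := by
    refine ⟨?_, ?_, ?_, ?_⟩
    · -- membership
      intro i hiK
      by_cases hi : i ≤ i'
      · rw [hs'le i hi]; exact hsgmem i hiK
      · push_neg at hi
        rw [hs'gt i hi]
        rcases Nat.eq_zero_or_pos (s i - D i) with h0 | hpos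
        · rw [h0]; right; rfl
        · rcases Nat.eq_zero_or_pos (D i) with hD0 | hDpos
          · rw [hD0, Nat.sub_zero]
            have := hsmem i hiK
            rcases this with h | h
            · left; exact h
            · simp only [Set.mem_singleton_iff] at h; omega
          · -- D i > 0 and s i > D i
            have hsi : s i ∈ S := by
              rcases hsmem i hiK with h | h
              · exact h
              · simp only [Set.mem_singleton_iff] at h; omega
            rw [hSdef] at hsi
            obtain ⟨j₁, hj1, hj2, hj3⟩ := hsi
            obtain ⟨d, hd⟩ := hdvdD i (by omega)
            have hd1 : 1 ≤ d := by
              rcases Nat.eq_zero_or_pos d with h | h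
              · rw [h, Nat.mul_zero] at hd; omega
              · exact h
            have key : s i - D i = (j₁ - d) * s₀ := by
              rw [hj3, hd, Nat.sub_mul, mul_comm s₀ d]
            have hjd : 1 ≤ j₁ - d := by
              rcases Nat.eq_zero_or_pos (j₁ - d) with h | h
              · rw [key, h, Nat.zero_mul] at hpos; omega
              · exact h
            left
            rw [hSdef]
            exact ⟨j₁ - d, hjd, by omega, key⟩
    · -- spending constraint
      intro i hiK
      rcases lt_trichotomy i i' with hi | hi | hi
      · rw [hs'le i hi.le, ← hfirst i hi, hB's i hi.le]
        exact hsle i hiK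
      · subst hi
        rw [hs'le i le_rfl, hB'g i (by omega)]
        exact (hsgfeas i hiK).1
      · obtain ⟨h1, h2⟩ := hinv i (by omega) (by omega)
        have hsi := hsle i hiK
        rw [hs'gt i hi]
        rcases le_or_gt (s i) (D i) with hc | hc
        · have : ((s i - D i : ℕ) : ℤ) = 0 := by omega
          rw [this]; exact h1
        · have : ((s i - D i : ℕ) : ℤ) = (s i : ℤ) - (D i : ℤ) := by omega
          rw [this]; omega
    · -- nonnegativity
      intro i hiK
      by_cases hi : i ≤ i'
      · rw [hB's i hi]; exact hsnn i hiK
      · exact (hinv i (by omega) hiK).1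
    · -- final level
      have := (hinv K (by omega) le_rfl).1
      simpa using this
  refine ⟨s', hfeas, hs'le, ?_⟩
  -- telescoping sum
  have htel : ∀ t, i'+1 ≤ t →
      (∑ j ∈ Finset.Ico (i'+1) t, s j) + D t =
      (∑ j ∈ Finset.Ico (i'+1) t, s' j) + D (i'+1) := by
    intro t ht
    induction t, ht using Nat.le_induction with
    | base => simp
    | succ t ht ih =>
      rw [Finset.sum_Ico_succ_top ht, Finset.sum_Ico_succ_top ht]
      have h1 := hDstep t ht
      have h2 := hs'gt t (by omega)
      omega
  have hK1 : i' + 1 ≤ K := hi'K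
  have hsplit1 : ∑ i ∈ Finset.range (i'+1), s i + ∑ i ∈ Finset.Ico (i'+1) K, s i
      = ∑ i ∈ Finset.range K, s i := Finset.sum_range_add_sum_Ico s hK1
  have hsplit2 : ∑ i ∈ Finset.range (i'+1), s' i + ∑ i ∈ Finset.Ico (i'+1) K, s' i
      = ∑ i ∈ Finset.range K, s' i := Finset.sum_range_add_sum_Ico s' hK1
  have hhead : ∑ i ∈ Finset.range (i'+1), s' i
      = ∑ i ∈ Finset.range (i'+1), s i + D (i'+1) := by
    rw [Finset.sum_range_succ, Finset.sum_range_succ]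
    have : ∑ i ∈ Finset.range i', s' i = ∑ i ∈ Finset.range i', s i := by
      apply Finset.sum_congr rfl
      intro j hj
      simp only [Finset.mem_range] at hj
      rw [hs'le j hj.le, ← hfirst j hj]
    rw [this, hD1, hs'le i' le_rfl]
    omega
  have h5 : ∑ j ∈ Finset.Ico (i'+1) K, s j ≤
      ∑ j ∈ Finset.Ico (i'+1) K, s' j + (sg i' - s i') := by
    have h6 := htel K hK1
    rw [hD1] at h6
    omega
  have h7 : D (i'+1) = sg i' - s i' := hD1
  have h8 : s' i' = sg i' := hs'le i' le_rfl
  omega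
end

section
/- Let K ≥ 1, let F be a nonempty set of vectors s : {0,…,K−1} → ℕ (the feasible solutions), let U : ℕ → ℕ be any function, and let μ > 0 be a real number. Suppose s* ∈ F maximizes Σ_{i=0}^{K−1} U(s(i)) over all s ∈ F, and s̃ ∈ F maximizes Σ_{i=0}^{K−1} ⌊U(s(i))/μ⌋ over all s ∈ F. Then Σ_{i=0}^{K−1} U(s̃(i)) ≥ Σ_{i=0}^{K−1} U(s*(i)) − K·μ. -/
/-- Scaling lemma: if `s*` maximizes `∑ U(s(i))` over the feasible set `F` and
`s̃` maximizes the scaled-and-rounded utility `∑ ⌊U(s(i))/μ⌋` over `F`, then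
`∑ U(s̃(i)) ≥ ∑ U(s*(i)) − K·μ`. -/
theorem scaled_optimum_close
    (K : ℕ) (hK : 1 ≤ K)
    (F : Set (ℕ → ℕ)) (hF : F.Nonempty)
    (U : ℕ → ℕ) (μ : ℝ) (hμ : 0 < μ)
    (sstar : ℕ → ℕ) (hstarF : sstar ∈ F)
    (hstar : ∀ s ∈ F, ∑ i ∈ Finset.range K, U (s i) ≤
      ∑ i ∈ Finset.range K, U (sstar i))
    (stilde : ℕ → ℕ) (htildeF : stilde ∈ F)
    (htilde : ∀ s ∈ F,
      ∑ i ∈ Finset.range K, ⌊(U (s i) : ℝ) / μ⌋ ≤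
        ∑ i ∈ Finset.range K, ⌊(U (stilde i) : ℝ) / μ⌋) :
    (∑ i ∈ Finset.range K, (U (sstar i) : ℝ)) - K * μ ≤
      ∑ i ∈ Finset.range K, (U (stilde i) : ℝ) := by
  have key : ∀ u : ℕ, (u : ℝ) - μ ≤ μ * ⌊(u : ℝ) / μ⌋ ∧ μ * ⌊(u : ℝ) / μ⌋ ≤ u := by
    intro u
    constructor
    · have h := Int.sub_one_lt_floor ((u : ℝ) / μ)
      have h' : (u : ℝ) / μ < ⌊(u : ℝ) / μ⌋ + 1 := by linarith
      have := (div_lt_iff₀ hμ).mp h'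
      nlinarith
    · have h := Int.floor_le ((u : ℝ) / μ)
      have := (le_div_iff₀ hμ).mp h
      nlinarith
  have h1 : (∑ i ∈ Finset.range K, (U (sstar i) : ℝ)) - K * μ ≤
      μ * ∑ i ∈ Finset.range K, (⌊(U (sstar i) : ℝ) / μ⌋ : ℝ) := by
    rw [Finset.mul_sum]
    have : ∑ i ∈ Finset.range K, ((U (sstar i) : ℝ) - μ) ≤
        ∑ i ∈ Finset.range K, μ * (⌊(U (sstar i) : ℝ) / μ⌋ : ℝ) :=
      Finset.sum_le_sum fun i _ => (key _).1
    simpa [Finset.sum_sub_distrib, mul_comm] using this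
  have h2 : μ * ∑ i ∈ Finset.range K, (⌊(U (sstar i) : ℝ) / μ⌋ : ℝ) ≤
      μ * ∑ i ∈ Finset.range K, (⌊(U (stilde i) : ℝ) / μ⌋ : ℝ) := by
    apply mul_le_mul_of_nonneg_left _ hμ.le
    exact_mod_cast htilde sstar hstarF
  have h3 : μ * ∑ i ∈ Finset.range K, (⌊(U (stilde i) : ℝ) / μ⌋ : ℝ) ≤
      ∑ i ∈ Finset.range K, (U (stilde i) : ℝ) := by
    rw [Finset.mul_sum]
    exact Finset.sum_le_sum fun i _ => (key _).2
  linarith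
end

section
/- For every n ≥ 1, every w : {1,…,n} → ℕ, and every c ∈ ℕ, the following are equivalent: (a) there exists x : {1,…,n} → {0,1} with Σ_{j=1}^{n} w_j·x_j = c; (b) there exist x, y : {1,…,n} → ℕ with Σ_{j=1}^{n} [ (2^{n−j} + 2ⁿ·w_j)·x_j + 2^{n−j}·y_j ] = 2ⁿ·c + 2ⁿ − 1 and Σ_{j=1}^{n} (x_j + y_j) ≤ n. Moreover, any x, y witnessing (b) necessarily satisfy x_j + y_j = 1 (hence x_j ∈ {0,1}) for every j, and Σ_{j=1}^{n} w_j·x_j = c. -/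
/-- Geometric sum `∑_{j=1}^n 2^{n-j} = 2^n - 1`. -/
lemma sspd_geo_sum : ∀ n : ℕ, ∑ j ∈ Finset.Icc 1 n, 2 ^ (n - j) = 2 ^ n - 1 := by
  intro n
  induction n with
  | zero => simp
  | succ k ih =>
    rw [Finset.sum_Icc_succ_top (by omega : (1:ℕ) ≤ k + 1)]
    have h1 : ∑ j ∈ Finset.Icc 1 k, 2 ^ (k + 1 - j)
        = 2 * ∑ j ∈ Finset.Icc 1 k, 2 ^ (k - j) := by
      rw [Finset.mul_sum]
      refine Finset.sum_congr rfl fun j hj => ?_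
      have hj' := Finset.mem_Icc.mp hj
      have h : k + 1 - j = (k - j) + 1 := by omega
      rw [h, pow_succ]; ring
    have h2 : 1 ≤ 2 ^ k := Nat.one_le_two_pow
    have h3 : k + 1 - (k + 1) = 0 := by omega
    have h4 : (2:ℕ) ^ (k + 1) = 2 * 2 ^ k := by rw [pow_succ]; ring
    rw [h1, ih, h3, pow_zero, h4]
    omega

/-- Key rigidity lemma: if `∑ 2^{n-j} a_j + 1 = 2^n m` with `∑ a_j ≤ n`,
then `m = 1` and all `a_j = 1`. -/
lemma sspd_key : ∀ (n : ℕ) (a : ℕ → ℕ) (m : ℕ),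
    (∑ j ∈ Finset.Icc 1 n, 2 ^ (n - j) * a j) + 1 = 2 ^ n * m →
    (∑ j ∈ Finset.Icc 1 n, a j) ≤ n →
    m = 1 ∧ ∀ j ∈ Finset.Icc 1 n, a j = 1 := by
  intro n
  induction n with
  | zero =>
    intro a m h1 h2
    have he : Finset.Icc 1 0 = (∅ : Finset ℕ) := Finset.Icc_eq_empty (by omega)
    rw [he] at h1 ⊢
    simp only [Finset.sum_empty, pow_zero, one_mul, zero_add] at h1
    exact ⟨h1.symm, by simp⟩
  | succ n ih =>
    intro a m h1 h2
    rw [Finset.sum_Icc_succ_top (by omega : (1:ℕ) ≤ n + 1)] at h1 h2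
    have hdouble : ∑ j ∈ Finset.Icc 1 n, 2 ^ (n + 1 - j) * a j
        = 2 * ∑ j ∈ Finset.Icc 1 n, 2 ^ (n - j) * a j := by
      rw [Finset.mul_sum]
      refine Finset.sum_congr rfl fun j hj => ?_
      have hj' := Finset.mem_Icc.mp hj
      have h : n + 1 - j = (n - j) + 1 := by omega
      rw [h, pow_succ]; ring
    rw [hdouble] at h1
    have htop : n + 1 - (n + 1) = 0 := by omega
    rw [htop, pow_zero, one_mul] at h1
    have hpow : (2:ℕ) ^ (n + 1) = 2 * 2 ^ n := by rw [pow_succ]; ring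
    rw [hpow] at h1
    set T := ∑ j ∈ Finset.Icc 1 n, 2 ^ (n - j) * a j with hT
    rw [mul_assoc] at h1
    -- h1 : 2 * T + a (n+1) + 1 = 2 * (2^n * m)
    obtain ⟨b, hb⟩ : ∃ b, a (n + 1) = 2 * b + 1 := ⟨a (n + 1) / 2, by omega⟩
    have h1' : T + b + 1 = 2 ^ n * m := by omega
    rcases Nat.eq_zero_or_pos n with hn0 | hn1
    · subst hn0
      have he : Finset.Icc 1 0 = (∅ : Finset ℕ) := Finset.Icc_eq_empty (by omega)
      have hT0 : T = 0 := by rw [hT, he]; simp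
      have hsum0 : ∑ k ∈ Finset.Icc 1 0, a k = 0 := by rw [he]; simp
      have hb0 : b = 0 := by omega
      rw [pow_zero, one_mul] at h1'
      refine ⟨by omega, fun j hj => ?_⟩
      have hj' := Finset.mem_Icc.mp hj
      have hj1 : j = 1 := by omega
      subst hj1
      have hb' : a 1 = 2 * b + 1 := hb
      omega
    · set a' : ℕ → ℕ := fun j => if j = n then a n + b else a j with ha'
      have hn_mem : n ∈ Finset.Icc 1 n := Finset.mem_Icc.mpr ⟨hn1, le_refl n⟩
      have hcongr : ∀ f : ℕ → ℕ → ℕ, ∀ j ∈ (Finset.Icc 1 n).erase n,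
          f j (a' j) = f j (a j) := by
        intro f j hj
        have hne := Finset.ne_of_mem_erase hj
        simp [ha', hne]
      have hs1 : ∑ j ∈ Finset.Icc 1 n, 2 ^ (n - j) * a' j = T + b := by
        rw [← Finset.sum_erase_add _ _ hn_mem, hT,
            ← Finset.sum_erase_add _ _ hn_mem]
        rw [Finset.sum_congr rfl (hcongr (fun j v => 2 ^ (n - j) * v))]
        simp [ha', Nat.sub_self]
        omega
      have hs2 : ∑ j ∈ Finset.Icc 1 n, a' j = (∑ j ∈ Finset.Icc 1 n, a j) + b := by
        rw [← Finset.sum_erase_add _ _ hn_mem,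
            ← Finset.sum_erase_add _ a hn_mem]
        rw [Finset.sum_congr rfl (hcongr (fun j v => v))]
        simp [ha']
        omega
      obtain ⟨hm, hall⟩ := ih a' m (by rw [hs1]; exact h1') (by omega)
      -- all a' j = 1, so their sum is n, forcing b = 0
      have hsum' : ∑ j ∈ Finset.Icc 1 n, a' j = n := by
        rw [Finset.sum_congr rfl hall]
        simp
      have hb0 : b = 0 := by omega
      refine ⟨hm, fun j hj => ?_⟩
      have hj' := Finset.mem_Icc.mp hj
      by_cases hjtop : j = n + 1
      · subst hjtop; omega
      · have hjIcc : j ∈ Finset.Icc 1 n := Finset.mem_Icc.mpr ⟨hj'.1, by omega⟩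
        have h := hall j hjIcc
        by_cases hjn : j = n
        · subst hjn
          simp [ha', hb0] at h
          exact h
        · simpa [ha', hjn] using h

/-- Equivalence of the subset-sum decision problem SSP-D(w,c) with its merged
formulation SSP-D₃ (coefficients `w̃_j = 2^{n−j} + 2ⁿ·w_j`, `w̄_j = 2^{n−j}`,
target `c̄ = 2ⁿ·c + 2ⁿ − 1`), together with the fact that any witness of the
merged formulation satisfies `x_j + y_j = 1` for all `j` and `∑ w_j·x_j = c`. -/
theorem sspd_merged_equivalence (n : ℕ) (hn : 1 ≤ n) (w : ℕ → ℕ) (c : ℕ) :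
    ((∃ x : ℕ → ℕ, (∀ j ∈ Finset.Icc 1 n, x j = 0 ∨ x j = 1) ∧
        ∑ j ∈ Finset.Icc 1 n, w j * x j = c) ↔
      (∃ x y : ℕ → ℕ,
        ∑ j ∈ Finset.Icc 1 n,
            ((2 ^ (n - j) + 2 ^ n * w j) * x j + 2 ^ (n - j) * y j)
          = 2 ^ n * c + 2 ^ n - 1 ∧
        ∑ j ∈ Finset.Icc 1 n, (x j + y j) ≤ n)) ∧
    (∀ x y : ℕ → ℕ,
      ∑ j ∈ Finset.Icc 1 n,
          ((2 ^ (n - j) + 2 ^ n * w j) * x j + 2 ^ (n - j) * y j)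
        = 2 ^ n * c + 2 ^ n - 1 →
      ∑ j ∈ Finset.Icc 1 n, (x j + y j) ≤ n →
      (∀ j ∈ Finset.Icc 1 n, x j + y j = 1) ∧
      ∑ j ∈ Finset.Icc 1 n, w j * x j = c) := by
  have hpow1 : 1 ≤ 2 ^ n := Nat.one_le_two_pow
  have hsplit : ∀ x y : ℕ → ℕ,
      ∑ j ∈ Finset.Icc 1 n, ((2 ^ (n - j) + 2 ^ n * w j) * x j + 2 ^ (n - j) * y j)
      = (∑ j ∈ Finset.Icc 1 n, 2 ^ (n - j) * (x j + y j))
        + 2 ^ n * ∑ j ∈ Finset.Icc 1 n, w j * x j := by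
    intro x y
    rw [Finset.mul_sum, ← Finset.sum_add_distrib]
    exact Finset.sum_congr rfl fun j _ => by ring
  have hmain : ∀ x y : ℕ → ℕ,
      ∑ j ∈ Finset.Icc 1 n,
          ((2 ^ (n - j) + 2 ^ n * w j) * x j + 2 ^ (n - j) * y j)
        = 2 ^ n * c + 2 ^ n - 1 →
      ∑ j ∈ Finset.Icc 1 n, (x j + y j) ≤ n →
      (∀ j ∈ Finset.Icc 1 n, x j + y j = 1) ∧
      ∑ j ∈ Finset.Icc 1 n, w j * x j = c := by
    intro x y heq hle
    rw [hsplit] at heq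
    set T := ∑ j ∈ Finset.Icc 1 n, 2 ^ (n - j) * (x j + y j) with hT
    set W := ∑ j ∈ Finset.Icc 1 n, w j * x j with hW
    have hWle : W ≤ c := by
      by_contra h
      push_neg at h
      have h5 : 2 ^ n * (c + 1) ≤ 2 ^ n * W := Nat.mul_le_mul_left _ (by omega)
      have h6 : 2 ^ n * (c + 1) = 2 ^ n * c + 2 ^ n := by ring
      omega
    set m := c + 1 - W with hm
    have hCm : c + 1 = W + m := by omega
    have heq2 : T + 1 = 2 ^ n * m := by
      have h7 : 2 ^ n * (c + 1) = 2 ^ n * W + 2 ^ n * m := by rw [hCm]; ring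
      have h8 : 2 ^ n * (c + 1) = 2 ^ n * c + 2 ^ n := by ring
      omega
    obtain ⟨hm1, hall⟩ := sspd_key n (fun j => x j + y j) m heq2 hle
    exact ⟨hall, by omega⟩
  refine ⟨⟨?_, ?_⟩, hmain⟩
  · rintro ⟨x, hx01, hxc⟩
    refine ⟨x, fun j => 1 - x j, ?_, ?_⟩
    · rw [hsplit]
      have h1 : ∑ j ∈ Finset.Icc 1 n, 2 ^ (n - j) * (x j + (1 - x j))
          = 2 ^ n - 1 := by
        rw [show (2:ℕ) ^ n - 1 = ∑ j ∈ Finset.Icc 1 n, 2 ^ (n - j) from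
          (sspd_geo_sum n).symm]
        refine Finset.sum_congr rfl fun j hj => ?_
        rcases hx01 j hj with h | h <;> simp [h]
      rw [h1, hxc]
      omega
    · have h1 : ∑ j ∈ Finset.Icc 1 n, (x j + (1 - x j))
          = ∑ j ∈ Finset.Icc 1 n, 1 := by
        refine Finset.sum_congr rfl fun j hj => ?_
        rcases hx01 j hj with h | h <;> simp [h]
      rw [h1]
      simp
  · rintro ⟨x, y, heq, hle⟩
    obtain ⟨hall, hWc⟩ := hmain x y heq hle
    exact ⟨x, fun j hj => by have := hall j hj; omega, hWc⟩
end

section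
/- For every n ≥ 1 and every a : {1,…,n} → ℕ, if Σ_{j=1}^{n} a_j ≤ n and Σ_{j=1}^{n} a_j·2^{n−j} ≡ 2ⁿ − 1 (mod 2ⁿ), then a_j = 1 for every j, and consequently Σ_{j=1}^{n} a_j·2^{n−j} = 2ⁿ − 1. -/
private lemma sum_two_pow_aux (n : ℕ) :
    ∑ j ∈ Finset.Icc 1 n, 2 ^ (n - j) = 2 ^ n - 1 := by
  induction n with
  | zero => simp
  | succ n ih =>
    rw [Finset.sum_Icc_succ_top (by omega)]
    have h : ∑ j ∈ Finset.Icc 1 n, 2 ^ (n + 1 - j)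
        = 2 * ∑ j ∈ Finset.Icc 1 n, 2 ^ (n - j) := by
      rw [Finset.mul_sum]
      refine Finset.sum_congr rfl fun j hj => ?_
      simp only [Finset.mem_Icc] at hj
      rw [show n + 1 - j = (n - j) + 1 by omega, pow_succ]
      ring
    have hp : 0 < 2 ^ n := Nat.pow_pos (by norm_num)
    rw [h, ih]
    have h2 : (2:ℕ) ^ (n + 1) = 2 ^ n * 2 := pow_succ 2 n
    simp only [Nat.sub_self, pow_zero]
    omega

private lemma pow_two_rep_aux (n : ℕ) (hn : 1 ≤ n) : ∀ a : ℕ → ℕ,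
    (∑ j ∈ Finset.Icc 1 n, a j ≤ n) →
    (∑ j ∈ Finset.Icc 1 n, a j * 2 ^ (n - j) ≡ 2 ^ n - 1 [MOD 2 ^ n]) →
    ∀ j ∈ Finset.Icc 1 n, a j = 1 := by
  induction n, hn using Nat.le_induction with
  | base =>
    intro a hs hm j hj
    simp only [Finset.Icc_self, Finset.sum_singleton, Finset.mem_singleton] at hs hm hj
    subst hj
    simp only [Nat.sub_self, pow_zero, mul_one, pow_one] at hm
    have : a 1 % 2 = 1 % 2 := hm
    omega
  | succ n hn ih =>
    intro a hs hm
    rw [Finset.sum_Icc_succ_top (by omega)] at hs hm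
    set T := ∑ j ∈ Finset.Icc 1 n, a j * 2 ^ (n - j) with hT
    have hsplit : ∑ j ∈ Finset.Icc 1 n, a j * 2 ^ (n + 1 - j) = 2 * T := by
      rw [hT, Finset.mul_sum]
      refine Finset.sum_congr rfl fun j hj => ?_
      simp only [Finset.mem_Icc] at hj
      rw [show n + 1 - j = (n - j) + 1 by omega, pow_succ]
      ring
    rw [hsplit] at hm
    simp only [Nat.sub_self, pow_zero, mul_one] at hm
    -- hm : 2 * T + a (n+1) ≡ 2^(n+1) - 1 [MOD 2^(n+1)]
    have hp : 0 < 2 ^ n := Nat.pow_pos (by norm_num)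
    have h2n : (2:ℕ) ^ (n + 1) = 2 ^ n * 2 := pow_succ 2 n
    have h2 : (2 * T + a (n + 1)) % 2 = (2 ^ (n + 1) - 1) % 2 :=
      hm.of_dvd (dvd_pow_self 2 (Nat.succ_ne_zero n))
    have hodd : a (n + 1) % 2 = 1 := by omega
    obtain ⟨b, hab⟩ : ∃ b, a (n + 1) = 2 * b + 1 := ⟨a (n + 1) / 2, by omega⟩
    -- deduce T + b ≡ 2^n - 1 [MOD 2^n]
    have hdvd : ((2 ^ (n + 1) : ℕ) : ℤ) ∣ ((2 ^ (n + 1) - 1 : ℕ) : ℤ) - ((2 * T + a (n + 1) : ℕ) : ℤ) :=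
      Nat.modEq_iff_dvd.mp hm
    have hcast1 : ((2 ^ (n + 1) - 1 : ℕ) : ℤ) = 2 * 2 ^ n - 1 := by
      have h1 : (1 : ℕ) ≤ 2 ^ (n + 1) := Nat.one_le_two_pow
      zify [h1]
      rw [pow_succ]; ring
    obtain ⟨k, hk⟩ := hdvd
    rw [hcast1, hab] at hk
    push_cast at hk
    have hzdvd : ((2 : ℤ) ^ n) ∣ ((2 : ℤ) ^ n - 1) - ((T : ℤ) + (b : ℤ)) := by
      refine ⟨k, ?_⟩
      rw [pow_succ] at hk
      nlinarith [hk]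
    have hm' : T + b ≡ 2 ^ n - 1 [MOD 2 ^ n] := by
      rw [Nat.modEq_iff_dvd]
      have h1 : (1 : ℕ) ≤ 2 ^ n := Nat.one_le_two_pow
      zify [h1]
      convert hzdvd using 1
    -- apply induction hypothesis to the updated function
    set a' := Function.update a n (a n + b) with ha'
    have hmem : n ∈ Finset.Icc 1 n := Finset.mem_Icc.mpr ⟨hn, le_refl n⟩
    have herase : ∀ f : ℕ → ℕ, ∀ j ∈ (Finset.Icc 1 n).erase n,
        a' j * f j = a j * f j := by
      intro f j hj
      rw [ha', Function.update_of_ne (Finset.ne_of_mem_erase hj)]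
    have hS1 : ∑ j ∈ Finset.Icc 1 n, a' j * 2 ^ (n - j) = T + b := by
      rw [hT, ← Finset.sum_erase_add _ _ hmem,
        ← Finset.sum_erase_add (f := fun j => a j * 2 ^ (n - j)) _ hmem,
        Finset.sum_congr rfl (herase _)]
      simp [ha', Function.update_self]
      ring
    have hS2 : ∑ j ∈ Finset.Icc 1 n, a' j = (∑ j ∈ Finset.Icc 1 n, a j) + b := by
      rw [← Finset.sum_erase_add _ _ hmem,
        ← Finset.sum_erase_add (f := fun j => a j) _ hmem]
      have : ∀ j ∈ (Finset.Icc 1 n).erase n, a' j = a j := by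
        intro j hj
        rw [ha', Function.update_of_ne (Finset.ne_of_mem_erase hj)]
      rw [Finset.sum_congr rfl this]
      simp [ha', Function.update_self]
      ring
    have hbudget : ∑ j ∈ Finset.Icc 1 n, a' j ≤ n := by
      rw [hS2]; omega
    have hall : ∀ j ∈ Finset.Icc 1 n, a' j = 1 := by
      refine ih a' hbudget ?_
      rw [hS1]; exact hm'
    have hsum' : ∑ j ∈ Finset.Icc 1 n, a' j = n := by
      rw [Finset.sum_congr rfl hall, Finset.sum_const, smul_eq_mul, mul_one,
        Nat.card_Icc]
      omega
    have hb0 : b = 0 := by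
      rw [hS2] at hsum'
      omega
    have han : a n = 1 := by
      have := hall n hmem
      rw [ha', Function.update_self] at this
      omega
    intro j hj
    rcases Finset.mem_Icc.mp hj with ⟨hj1, hj2⟩
    rcases eq_or_lt_of_le hj2 with h | h
    · rw [h, hab, hb0]
    · have hjn : j ∈ Finset.Icc 1 n := Finset.mem_Icc.mpr ⟨hj1, by omega⟩
      by_cases hje : j = n
      · rw [hje]; exact han
      · have := hall j hjn
        rwa [ha', Function.update_of_ne hje] at this
  
/-- Uniqueness of the representation of `2ⁿ − 1` by the powers
`2^{n−1}, …, 2⁰`: if `∑_{j=1}^n a_j ≤ n` and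
`∑_{j=1}^n a_j·2^{n−j} ≡ 2ⁿ − 1 (mod 2ⁿ)`, then all `a_j = 1` and the sum
equals `2ⁿ − 1` exactly. -/
theorem pow_two_representation_unique (n : ℕ) (hn : 1 ≤ n) (a : ℕ → ℕ)
    (hsum : ∑ j ∈ Finset.Icc 1 n, a j ≤ n)
    (hmod : ∑ j ∈ Finset.Icc 1 n, a j * 2 ^ (n - j) ≡ 2 ^ n - 1 [MOD 2 ^ n]) :
    (∀ j ∈ Finset.Icc 1 n, a j = 1) ∧
    ∑ j ∈ Finset.Icc 1 n, a j * 2 ^ (n - j) = 2 ^ n - 1 := by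
  have hall := pow_two_rep_aux n hn a hsum hmod
  refine ⟨hall, ?_⟩
  calc ∑ j ∈ Finset.Icc 1 n, a j * 2 ^ (n - j)
      = ∑ j ∈ Finset.Icc 1 n, 2 ^ (n - j) :=
        Finset.sum_congr rfl fun j hj => by rw [hall j hj, one_mul]
    _ = 2 ^ n - 1 := sum_two_pow_aux n
end
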